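/- Let p ≥ 3 and let G=(V,E) be a (p,2)-flex-connected graph with unsafe edge set U. Let A,B,C be (p,3)-violated sets and suppose D₁,D₂,D₃,D₄ ⊆ V satisfy the multiset identity δ(A) + δ(B) + δ(C) = δ(D₁) + δ(D₂) + δ(D₃) + δ(D₄) (each edge counted with multiplicity on both sides). Then at least one of D₁,D₂,D₃,D₄ is empty or equal to V (i.e., has empty cut). -/

import Mathlib

open Finset

variable {V E : Type}

/-- The cut of a vertex set `S`: edges with exactly one endpoint in `S`. -/
def cutOf [Fintype E] [DecidableEq V] (ends : E → V × V) (S : Finset V) : Finset E :=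
  Finset.univ.filter (fun e => Xor ((ends e).1 ∈ S) ((ends e).2 ∈ S))

/-- Edges with one endpoint in `X` and the other in `Y`. -/
def btw [Fintype E] [DecidableEq V] (ends : E → V × V) (X Y : Finset V) : Finset E :=
  Finset.univ.filter (fun e =>
    ((ends e).1 ∈ X ∧ (ends e).2 ∈ Y) ∨ ((ends e).1 ∈ Y ∧ (ends e).2 ∈ X))

/-- `A` and `B` cross. -/
def crosses [Fintype V] [DecidableEq V] (A B : Finset V) : Prop :=
  (A \ B).Nonempty ∧ (A ∩ B).Nonempty ∧ (B \ A).Nonempty ∧ ((A ∪ B)ᶜ).Nonempty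

/-- `(p,2)`-flex-connectivity: after removing any at most 2 unsafe edges,
every nonempty proper cut has at least `p` edges. -/
def flexConn [Fintype V] [Fintype E] [DecidableEq V] [DecidableEq E]
    (p : ℕ) (ends : E → V × V) (U : Finset E) : Prop :=
  ∀ F ⊆ U, F.card ≤ 2 → ∀ S : Finset V, S.Nonempty → S ≠ Finset.univ →
    p ≤ (cutOf ends S \ F).card

/-- A `(p,3)`-violated set: its cut has exactly `p+2` edges, at least 3 unsafe. -/
def violatedSet [Fintype E] [DecidableEq V] [DecidableEq E]
    (p : ℕ) (ends : E → V × V) (U : Finset E) (S : Finset V) : Prop :=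
  (cutOf ends S).card = p + 2 ∧ 3 ≤ (cutOf ends S ∩ U).card

instance [Fintype E] [DecidableEq V] [DecidableEq E]
    (p : ℕ) (ends : E → V × V) (U : Finset E) (S : Finset V) :
    Decidable (violatedSet p ends U S) := by unfold violatedSet; infer_instance

/-- `A` amenably crosses `B`. -/
def amenablyCrosses [Fintype V] [Fintype E] [DecidableEq V] [DecidableEq E]
    (ends : E → V × V) (U : Finset E) (A B : Finset V) : Prop :=
  crosses A B ∧
    (btw ends (A ∩ B) (B \ A) ∩ U = ∅ ∨ btw ends (A \ B) (A ∪ B)ᶜ ∩ U = ∅)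

lemma sum_indicator_card {α : Type} [DecidableEq α] (t s : Finset α) :
    ∑ e ∈ t, (if e ∈ s then (1:ℕ) else 0) = (t ∩ s).card := by
  rw [← Finset.filter_mem_eq_inter, Finset.card_filter]

lemma flex_bound [Fintype V] [Fintype E] [DecidableEq V] [DecidableEq E]
    (p : ℕ) (ends : E → V × V) (U : Finset E) (hflex : flexConn p ends U)
    (S : Finset V) (hne : S ≠ ∅) (hnu : S ≠ Finset.univ) :
    p + min (cutOf ends S ∩ U).card 2 ≤ (cutOf ends S).card := by
  obtain ⟨F, hFsub, hFcard⟩ := Finset.exists_subset_card_eq (s := cutOf ends S ∩ U)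
    (n := min (cutOf ends S ∩ U).card 2) (min_le_left _ _)
  have hFU : F ⊆ U := hFsub.trans (Finset.inter_subset_right)
  have hFc : F ⊆ cutOf ends S := hFsub.trans (Finset.inter_subset_left)
  have h := hflex F hFU (by rw [hFcard]; exact min_le_right _ _)
    S (Finset.nonempty_iff_ne_empty.mpr hne) hnu
  have hsd : (cutOf ends S \ F).card = (cutOf ends S).card - F.card :=
    Finset.card_sdiff_of_subset hFc
  have hle : F.card ≤ (cutOf ends S).card := Finset.card_le_card hFc
  omega

theorem stmt12 [Fintype V] [Fintype E] [DecidableEq V] [DecidableEq E]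
    (p : ℕ) (hp : 3 ≤ p) (ends : E → V × V) (U : Finset E)
    (hflex : flexConn p ends U) (A B C : Finset V)
    (hA : violatedSet p ends U A) (hB : violatedSet p ends U B)
    (hC : violatedSet p ends U C) (D₁ D₂ D₃ D₄ : Finset V)
    (hmul : ∀ e : E,
      ((if e ∈ cutOf ends A then 1 else 0) + (if e ∈ cutOf ends B then 1 else 0) +
        (if e ∈ cutOf ends C then 1 else 0) : ℕ) =
      (if e ∈ cutOf ends D₁ then 1 else 0) + (if e ∈ cutOf ends D₂ then 1 else 0) +
        (if e ∈ cutOf ends D₃ then 1 else 0) + (if e ∈ cutOf ends D₄ then 1 else 0)) :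
    (D₁ = ∅ ∨ D₁ = Finset.univ) ∨ (D₂ = ∅ ∨ D₂ = Finset.univ) ∨
    (D₃ = ∅ ∨ D₃ = Finset.univ) ∨ (D₄ = ∅ ∨ D₄ = Finset.univ) := by
  by_contra hcon
  push_neg at hcon
  obtain ⟨⟨h1e, h1u⟩, ⟨h2e, h2u⟩, ⟨h3e, h3u⟩, ⟨h4e, h4u⟩⟩ := hcon
  -- sum identity over all edges
  have htot : ∑ e, ((if e ∈ cutOf ends A then 1 else 0) + (if e ∈ cutOf ends B then 1 else 0) +
      (if e ∈ cutOf ends C then 1 else 0) : ℕ) =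
      ∑ e, ((if e ∈ cutOf ends D₁ then 1 else 0) + (if e ∈ cutOf ends D₂ then 1 else 0) +
        (if e ∈ cutOf ends D₃ then 1 else 0) + (if e ∈ cutOf ends D₄ then 1 else 0) : ℕ) :=
    Finset.sum_congr rfl fun e _ => hmul e
  have hU : ∑ e ∈ U, ((if e ∈ cutOf ends A then 1 else 0) + (if e ∈ cutOf ends B then 1 else 0) +
      (if e ∈ cutOf ends C then 1 else 0) : ℕ) =
      ∑ e ∈ U, ((if e ∈ cutOf ends D₁ then 1 else 0) + (if e ∈ cutOf ends D₂ then 1 else 0) +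
        (if e ∈ cutOf ends D₃ then 1 else 0) + (if e ∈ cutOf ends D₄ then 1 else 0) : ℕ) :=
    Finset.sum_congr rfl fun e _ => hmul e
  simp only [Finset.sum_add_distrib, sum_indicator_card, Finset.univ_inter] at htot hU
  rw [Finset.inter_comm U (cutOf ends A), Finset.inter_comm U (cutOf ends B),
    Finset.inter_comm U (cutOf ends C), Finset.inter_comm U (cutOf ends D₁),
    Finset.inter_comm U (cutOf ends D₂), Finset.inter_comm U (cutOf ends D₃),
    Finset.inter_comm U (cutOf ends D₄)] at hU
  have b1 := flex_bound p ends U hflex D₁ h1e.ne_empty h1u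
  have b2 := flex_bound p ends U hflex D₂ h2e.ne_empty h2u
  have b3 := flex_bound p ends U hflex D₃ h3e.ne_empty h3u
  have b4 := flex_bound p ends U hflex D₄ h4e.ne_empty h4u
  have c1 : (cutOf ends D₁ ∩ U).card ≤ (cutOf ends D₁).card :=
    Finset.card_le_card Finset.inter_subset_left
  have c2 : (cutOf ends D₂ ∩ U).card ≤ (cutOf ends D₂).card :=
    Finset.card_le_card Finset.inter_subset_left
  have c3 : (cutOf ends D₃ ∩ U).card ≤ (cutOf ends D₃).card :=
    Finset.card_le_card Finset.inter_subset_left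
  have c4 : (cutOf ends D₄ ∩ U).card ≤ (cutOf ends D₄).card :=
    Finset.card_le_card Finset.inter_subset_left
  obtain ⟨hAc, hAu⟩ := hA
  obtain ⟨hBc, hBu⟩ := hB
  obtain ⟨hCc, hCu⟩ := hC
  omega
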